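/- Let ψ₁ : ℝ² → ℝ be a Schwartz function and for T > 0 set ψ_T(x₁,x₂) = T^{-3/4} ψ₁(x₁/T^{1/4}, x₂/T^{1/2}). Then for every integer k ≥ 0 and every real α ≥ 0 there is a constant C (depending on ψ₁, k, α) such that ∫_{ℝ²} |∂₁^k ψ_T(x−y)| d(x,y)^α dy ≤ C (T^{1/4})^{−k+α} and ∫_{ℝ²} |∂₂^k ψ_T(x−y)| d(x,y)^α dy ≤ C (T^{1/4})^{−2k+α}, where d(x,y) = |x₁−y₁| + √|x₂−y₂|. -/

import Mathlib

open MeasureTheory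

/-- The parabolic distance `d(x,y) = |x₁−y₁| + √|x₂−y₂|` on `ℝ²`. -/
noncomputable def pd (x y : ℝ × ℝ) : ℝ := |x.1 - y.1| + Real.sqrt |x.2 - y.2|

/-- Parabolic rescaling of a kernel: `ψ_T(x₁,x₂) = T^{-3/4} ψ(x₁/T^{1/4}, x₂/T^{1/2})`. -/
noncomputable def pker (ψ : ℝ × ℝ → ℝ) (T : ℝ) (x : ℝ × ℝ) : ℝ :=
  T ^ (-(3 / 4 : ℝ)) * ψ (x.1 / T ^ ((1 : ℝ) / 4), x.2 / T ^ ((1 : ℝ) / 2))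

/-- `k`-th partial derivative in the first coordinate. -/
noncomputable def partial1 (k : ℕ) (f : ℝ × ℝ → ℝ) (z : ℝ × ℝ) : ℝ :=
  iteratedDeriv k (fun s => f (s, z.2)) z.1

/-- `k`-th partial derivative in the second coordinate. -/
noncomputable def partial2 (k : ℕ) (f : ℝ × ℝ → ℝ) (z : ℝ × ℝ) : ℝ :=
  iteratedDeriv k (fun s => f (z.1, s)) z.2

noncomputable def D1 (f : ℝ × ℝ → ℝ) : ℝ × ℝ → ℝ := fun z => fderiv ℝ f z (1, 0)
noncomputable def D2 (f : ℝ × ℝ → ℝ) : ℝ × ℝ → ℝ := fun z => fderiv ℝ f z (0, 1)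

lemma D1_contDiff {f : ℝ × ℝ → ℝ} (hf : ContDiff ℝ ((⊤ : ℕ∞) : WithTop ℕ∞) f) : ContDiff ℝ ((⊤ : ℕ∞) : WithTop ℕ∞) (D1 f) :=
  (hf.fderiv_right (by exact_mod_cast le_top)).clm_apply contDiff_const

lemma D2_contDiff {f : ℝ × ℝ → ℝ} (hf : ContDiff ℝ ((⊤ : ℕ∞) : WithTop ℕ∞) f) : ContDiff ℝ ((⊤ : ℕ∞) : WithTop ℕ∞) (D2 f) :=
  (hf.fderiv_right (by exact_mod_cast le_top)).clm_apply contDiff_const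

lemma deriv_slice1 {f : ℝ × ℝ → ℝ} (hf : ContDiff ℝ ((⊤ : ℕ∞) : WithTop ℕ∞) f) (w t : ℝ) :
    deriv (fun s => f (s, w)) t = D1 f (t, w) := by
  have h1 : HasFDerivAt f (fderiv ℝ f (t, w)) (t, w) :=
    (hf.differentiable (by simp) (t, w)).hasFDerivAt
  have h2 : HasDerivAt (fun s : ℝ => (s, w)) ((1 : ℝ), (0 : ℝ)) t :=
    (hasDerivAt_id t).prodMk (hasDerivAt_const t w)
  exact (h1.comp_hasDerivAt t h2).deriv

lemma deriv_slice2 {f : ℝ × ℝ → ℝ} (hf : ContDiff ℝ ((⊤ : ℕ∞) : WithTop ℕ∞) f) (w t : ℝ) :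
    deriv (fun s => f (w, s)) t = D2 f (w, t) := by
  have h1 : HasFDerivAt f (fderiv ℝ f (w, t)) (w, t) :=
    (hf.differentiable (by simp) (w, t)).hasFDerivAt
  have h2 : HasDerivAt (fun s : ℝ => (w, s)) ((0 : ℝ), (1 : ℝ)) t :=
    (hasDerivAt_const t w).prodMk (hasDerivAt_id t)
  exact (h1.comp_hasDerivAt t h2).deriv

lemma partial1_eq_iter (k : ℕ) : ∀ {f : ℝ × ℝ → ℝ}, ContDiff ℝ ((⊤ : ℕ∞) : WithTop ℕ∞) f →
    ∀ z, partial1 k f z = (D1^[k] f) z := by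
  induction k with
  | zero => intro f hf z; simp [partial1]
  | succ k ih =>
    intro f hf z
    rw [partial1, iteratedDeriv_succ']
    have hd : deriv (fun s => f (s, z.2)) = fun s => D1 f (s, z.2) :=
      funext fun t => deriv_slice1 hf z.2 t
    rw [hd]
    have h2 := ih (D1_contDiff hf) z
    rw [partial1] at h2
    rw [h2, Function.iterate_succ_apply]

lemma partial2_eq_iter (k : ℕ) : ∀ {f : ℝ × ℝ → ℝ}, ContDiff ℝ ((⊤ : ℕ∞) : WithTop ℕ∞) f →
    ∀ z, partial2 k f z = (D2^[k] f) z := by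
  induction k with
  | zero => intro f hf z; simp [partial2]
  | succ k ih =>
    intro f hf z
    rw [partial2, iteratedDeriv_succ']
    have hd : deriv (fun s => f (z.1, s)) = fun s => D2 f (z.1, s) :=
      funext fun t => deriv_slice2 hf z.1 t
    rw [hd]
    have h2 := ih (D2_contDiff hf) z
    rw [partial2] at h2
    rw [h2, Function.iterate_succ_apply]

lemma iterD1_contDiff {f : ℝ × ℝ → ℝ} (hf : ContDiff ℝ ((⊤ : ℕ∞) : WithTop ℕ∞) f) (k : ℕ) :
    ContDiff ℝ ((⊤ : ℕ∞) : WithTop ℕ∞) (D1^[k] f) := by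
  induction k with
  | zero => exact hf
  | succ k ih => rw [Function.iterate_succ_apply']; exact D1_contDiff ih

lemma iterD2_contDiff {f : ℝ × ℝ → ℝ} (hf : ContDiff ℝ ((⊤ : ℕ∞) : WithTop ℕ∞) f) (k : ℕ) :
    ContDiff ℝ ((⊤ : ℕ∞) : WithTop ℕ∞) (D2^[k] f) := by
  induction k with
  | zero => exact hf
  | succ k ih => rw [Function.iterate_succ_apply']; exact D2_contDiff ih

lemma partial1_continuous {f : ℝ × ℝ → ℝ} (hf : ContDiff ℝ ((⊤ : ℕ∞) : WithTop ℕ∞) f) (k : ℕ) :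
    Continuous (partial1 k f) := by
  have h : partial1 k f = D1^[k] f := funext (partial1_eq_iter k hf)
  rw [h]; exact (iterD1_contDiff hf k).continuous

lemma partial2_continuous {f : ℝ × ℝ → ℝ} (hf : ContDiff ℝ ((⊤ : ℕ∞) : WithTop ℕ∞) f) (k : ℕ) :
    Continuous (partial2 k f) := by
  have h : partial2 k f = D2^[k] f := funext (partial2_eq_iter k hf)
  rw [h]; exact (iterD2_contDiff hf k).continuous

lemma iteratedDeriv_cmul {n : ℕ} {g : ℝ → ℝ} (h : ContDiff ℝ n g) (a t : ℝ) :
    iteratedDeriv n (fun s => a * g s) t = a * iteratedDeriv n g t := by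
  have h0 : (fun s => a * g s) = a • g := by funext s; simp [smul_eq_mul]
  rw [h0, iteratedDeriv_eq_iteratedFDeriv, iteratedFDeriv_const_smul_apply h.contDiffAt,
    iteratedDeriv_eq_iteratedFDeriv]
  simp
lemma partial1_pker {ψ : ℝ × ℝ → ℝ} (hψ : ContDiff ℝ ((⊤ : ℕ∞) : WithTop ℕ∞) ψ) (k : ℕ) {T : ℝ} (hT : 0 < T)
    (z : ℝ × ℝ) :
    partial1 k (pker ψ T) z = T ^ (-(3 / 4 : ℝ)) * ((T ^ ((1 : ℝ) / 4))⁻¹ ^ k *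
      partial1 k ψ ((T ^ ((1 : ℝ) / 4))⁻¹ * z.1, (T ^ ((1 : ℝ) / 2))⁻¹ * z.2)) := by
  set A := T ^ ((1 : ℝ) / 4) with hA
  set B := T ^ ((1 : ℝ) / 2) with hB
  have hg : ContDiff ℝ (k : ℕ∞) (fun s : ℝ => ψ (s, B⁻¹ * z.2)) :=
    (hψ.comp (contDiff_id.prodMk contDiff_const)).of_le (by exact_mod_cast le_top)
  have h0 : (fun s => pker ψ T (s, z.2)) =
      fun s => T ^ (-(3 / 4 : ℝ)) * (fun u : ℝ => ψ (u, B⁻¹ * z.2)) (A⁻¹ * s) := by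
    funext s
    show T ^ (-(3 / 4 : ℝ)) * ψ (s / A, z.2 / B) = _
    rw [div_eq_inv_mul s A, div_eq_inv_mul z.2 B]
  rw [partial1, h0, iteratedDeriv_cmul]
  · congr 1
    have h1 := iteratedDeriv_comp_const_mul hg A⁻¹
    rw [congrFun h1 z.1]
    rw [partial1]
  · exact hg.comp ((contDiff_const.mul contDiff_id : ContDiff ℝ (k : ℕ∞) fun s : ℝ => A⁻¹ * s))

lemma partial2_pker {ψ : ℝ × ℝ → ℝ} (hψ : ContDiff ℝ ((⊤ : ℕ∞) : WithTop ℕ∞) ψ) (k : ℕ) {T : ℝ} (hT : 0 < T)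
    (z : ℝ × ℝ) :
    partial2 k (pker ψ T) z = T ^ (-(3 / 4 : ℝ)) * ((T ^ ((1 : ℝ) / 2))⁻¹ ^ k *
      partial2 k ψ ((T ^ ((1 : ℝ) / 4))⁻¹ * z.1, (T ^ ((1 : ℝ) / 2))⁻¹ * z.2)) := by
  set A := T ^ ((1 : ℝ) / 4) with hA
  set B := T ^ ((1 : ℝ) / 2) with hB
  have hg : ContDiff ℝ (k : ℕ∞) (fun s : ℝ => ψ (A⁻¹ * z.1, s)) :=
    (hψ.comp (contDiff_const.prodMk contDiff_id)).of_le (by exact_mod_cast le_top)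
  have h0 : (fun s => pker ψ T (z.1, s)) =
      fun s => T ^ (-(3 / 4 : ℝ)) * (fun u : ℝ => ψ (A⁻¹ * z.1, u)) (B⁻¹ * s) := by
    funext s
    show T ^ (-(3 / 4 : ℝ)) * ψ (z.1 / A, s / B) = _
    rw [div_eq_inv_mul z.1 A, div_eq_inv_mul s B]
  rw [partial2, h0, iteratedDeriv_cmul]
  · congr 1
    have h1 := iteratedDeriv_comp_const_mul hg B⁻¹
    rw [congrFun h1 z.2]
    rw [partial2]
  · exact hg.comp ((contDiff_const.mul contDiff_id : ContDiff ℝ (k : ℕ∞) fun s : ℝ => B⁻¹ * s))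
lemma integral_scale (G : ℝ × ℝ → ℝ) (hG : Continuous G) {a b : ℝ} (ha : 0 < a) (hb : 0 < b) :
    (∫ z : ℝ × ℝ, G (a⁻¹ * z.1, b⁻¹ * z.2)) = (a * b) * ∫ z, G z := by
  have hma : Measurable fun t : ℝ => a⁻¹ * t := measurable_const_mul _
  have hmb : Measurable fun t : ℝ => b⁻¹ * t := measurable_const_mul _
  have hm : Measurable (Prod.map (fun t : ℝ => a⁻¹ * t) (fun t : ℝ => b⁻¹ * t)) :=
    hma.prodMap hmb
  have hmap : Measure.map (Prod.map (fun t : ℝ => a⁻¹ * t) (fun t : ℝ => b⁻¹ * t))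
      (volume : Measure (ℝ × ℝ)) = (ENNReal.ofReal a * ENNReal.ofReal b) • volume := by
    rw [Measure.volume_eq_prod, ← Measure.map_prod_map _ _ hma hmb,
      Real.map_volume_mul_left (inv_ne_zero ha.ne'),
      Real.map_volume_mul_left (inv_ne_zero hb.ne')]
    rw [inv_inv, inv_inv, abs_of_pos ha, abs_of_pos hb]
    rw [← Measure.volume_eq_prod]
    have i1 : SigmaFinite (ENNReal.ofReal a • (volume : Measure ℝ)) := by
      have h : (ENNReal.ofReal a • (volume : Measure ℝ)) = a.toNNReal • volume := rfl
      rw [h]; infer_instance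
    have i2 : SigmaFinite (ENNReal.ofReal b • (volume : Measure ℝ)) := by
      have h : (ENNReal.ofReal b • (volume : Measure ℝ)) = b.toNNReal • volume := rfl
      rw [h]; infer_instance
    refine Measure.prod_eq fun s t hs ht => ?_
    simp only [Measure.smul_apply, smul_eq_mul, Measure.volume_eq_prod, Measure.prod_prod]
    ring
  have h1 : (∫ z : ℝ × ℝ, G (a⁻¹ * z.1, b⁻¹ * z.2)) =
      ∫ z, G z ∂(Measure.map (Prod.map (fun t : ℝ => a⁻¹ * t) (fun t : ℝ => b⁻¹ * t))
        (volume : Measure (ℝ × ℝ))) := by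
    rw [integral_map hm.aemeasurable hG.aestronglyMeasurable]
    rfl
  rw [h1, hmap, integral_smul_measure]
  rw [ENNReal.toReal_mul, ENNReal.toReal_ofReal ha.le, ENNReal.toReal_ofReal hb.le]
  rw [smul_eq_mul]
lemma calc1 (h : ℝ × ℝ → ℝ) (hc : Continuous h) {T : ℝ} (hT : 0 < T) {r : ℝ} (hr : 0 ≤ r)
    {α : ℝ} (hα : 0 ≤ α) (P : ℝ × ℝ → ℝ)
    (hP : ∀ z, P z = T ^ (-(3 / 4 : ℝ)) *
      (r * h ((T ^ ((1 : ℝ) / 4))⁻¹ * z.1, (T ^ ((1 : ℝ) / 2))⁻¹ * z.2)))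
    (x : ℝ × ℝ) :
    (∫ y : ℝ × ℝ, |P (x - y)| * pd x y ^ α) =
      (T ^ (-(3 / 4 : ℝ)) * r * (T ^ ((1 : ℝ) / 4)) ^ α *
        (T ^ ((1 : ℝ) / 4) * T ^ ((1 : ℝ) / 2))) *
        ∫ u : ℝ × ℝ, |h u| * (|u.1| + Real.sqrt |u.2|) ^ α := by
  set A := T ^ ((1 : ℝ) / 4) with hA
  set B := T ^ ((1 : ℝ) / 2) with hB
  have hA0 : 0 < A := Real.rpow_pos_of_pos hT _
  have hB0 : 0 < B := Real.rpow_pos_of_pos hT _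
  have hT3 : (0 : ℝ) < T ^ (-(3 / 4 : ℝ)) := Real.rpow_pos_of_pos hT _
  have hAB : A ^ (2 : ℕ) = B := by
    rw [hA, hB, ← Real.rpow_natCast (T ^ ((1 : ℝ) / 4)) 2, ← Real.rpow_mul hT.le]
    norm_num
  have hsB : Real.sqrt B = A := by rw [← hAB, Real.sqrt_sq hA0.le]
  set G : ℝ × ℝ → ℝ := fun u => |h u| * (|u.1| + Real.sqrt |u.2|) ^ α with hG
  have hGc : Continuous G := by
    refine (hc.abs).mul (Continuous.rpow_const ?_ fun z => Or.inr hα)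
    exact (continuous_abs.comp continuous_fst).add
      (Real.continuous_sqrt.comp (continuous_abs.comp continuous_snd))
  have key : ∀ z : ℝ × ℝ, |P z| * (|z.1| + Real.sqrt |z.2|) ^ α =
      (T ^ (-(3 / 4 : ℝ)) * r * A ^ α) * G (A⁻¹ * z.1, B⁻¹ * z.2) := by
    intro z
    have hdist : |z.1| + Real.sqrt |z.2| = A * (|A⁻¹ * z.1| + Real.sqrt |B⁻¹ * z.2|) := by
      rw [abs_mul, abs_mul, abs_of_pos (inv_pos.mpr hA0), abs_of_pos (inv_pos.mpr hB0),
        Real.sqrt_mul (inv_nonneg.mpr hB0.le), Real.sqrt_inv, hsB]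
      field_simp
    have habs : |P z| = T ^ (-(3 / 4 : ℝ)) * r *
        |h (A⁻¹ * z.1, B⁻¹ * z.2)| := by
      rw [hP z, abs_mul, abs_mul, abs_of_pos hT3, abs_of_nonneg hr]
      ring
    rw [habs, hdist, Real.mul_rpow hA0.le (add_nonneg (abs_nonneg _) (Real.sqrt_nonneg _))]
    simp only [hG]
    ring
  have step1 : (∫ y : ℝ × ℝ, |P (x - y)| * pd x y ^ α) =
      ∫ z : ℝ × ℝ, |P z| * (|z.1| + Real.sqrt |z.2|) ^ α := by
    have e : (fun y : ℝ × ℝ => |P (x - y)| * pd x y ^ α) =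
        fun y : ℝ × ℝ => (fun z : ℝ × ℝ => |P z| * (|z.1| + Real.sqrt |z.2|) ^ α) (x - y) := by
      funext y
      simp only [pd, Prod.fst_sub, Prod.snd_sub]
    rw [e]
    exact integral_sub_left_eq_self
      (fun z : ℝ × ℝ => |P z| * (|z.1| + Real.sqrt |z.2|) ^ α) volume x
  rw [step1]
  have step2 : (∫ z : ℝ × ℝ, |P z| * (|z.1| + Real.sqrt |z.2|) ^ α) =
      (T ^ (-(3 / 4 : ℝ)) * r * A ^ α) * ∫ z : ℝ × ℝ, G (A⁻¹ * z.1, B⁻¹ * z.2) := by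
    simp_rw [key]
    rw [integral_const_mul]
  rw [step2, integral_scale G hGc hA0 hB0]
  ring
/-- Moment bounds for derivatives of the parabolically rescaled Schwartz kernel:
`∫ |∂₁^k ψ_T(x−y)| d(x,y)^α dy ≤ C (T^{1/4})^{−k+α}` and
`∫ |∂₂^k ψ_T(x−y)| d(x,y)^α dy ≤ C (T^{1/4})^{−2k+α}`. -/
theorem stmt5 (ψ₁ : SchwartzMap (ℝ × ℝ) ℝ) (k : ℕ) (α : ℝ) (hα : 0 ≤ α) :
    ∃ C : ℝ, 0 < C ∧ ∀ T : ℝ, 0 < T → ∀ x : ℝ × ℝ,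
      (∫ y : ℝ × ℝ, |partial1 k (pker (⇑ψ₁) T) (x - y)| * pd x y ^ α) ≤
        C * (T ^ ((1 : ℝ) / 4)) ^ (-(k : ℝ) + α) ∧
      (∫ y : ℝ × ℝ, |partial2 k (pker (⇑ψ₁) T) (x - y)| * pd x y ^ α) ≤
        C * (T ^ ((1 : ℝ) / 4)) ^ (-(2 * k : ℝ) + α) := by
  have hψ : ContDiff ℝ ((⊤ : ℕ∞) : WithTop ℕ∞) (⇑ψ₁) := ψ₁.smooth'
  set B1 := ∫ u : ℝ × ℝ, |partial1 k (⇑ψ₁) u| * (|u.1| + Real.sqrt |u.2|) ^ α with hB1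
  set B2 := ∫ u : ℝ × ℝ, |partial2 k (⇑ψ₁) u| * (|u.1| + Real.sqrt |u.2|) ^ α with hB2
  have hB1n : 0 ≤ B1 := integral_nonneg fun u => mul_nonneg (abs_nonneg _)
    (Real.rpow_nonneg (add_nonneg (abs_nonneg _) (Real.sqrt_nonneg _)) _)
  have hB2n : 0 ≤ B2 := integral_nonneg fun u => mul_nonneg (abs_nonneg _)
    (Real.rpow_nonneg (add_nonneg (abs_nonneg _) (Real.sqrt_nonneg _)) _)
  have hCmax : 0 ≤ max B1 B2 := le_trans hB1n (le_max_left _ _)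
  refine ⟨max B1 B2 + 1, by linarith, fun T hT x => ?_⟩
  have hA0 : 0 < T ^ ((1 : ℝ) / 4) := Real.rpow_pos_of_pos hT _
  have hB0 : 0 < T ^ ((1 : ℝ) / 2) := Real.rpow_pos_of_pos hT _
  have hAB : (T ^ ((1 : ℝ) / 4)) ^ (2 : ℕ) = T ^ ((1 : ℝ) / 2) := by
    rw [← Real.rpow_natCast (T ^ ((1 : ℝ) / 4)) 2, ← Real.rpow_mul hT.le]
    norm_num
  have hone : T ^ (-(3 / 4 : ℝ)) * (T ^ ((1 : ℝ) / 4) * T ^ ((1 : ℝ) / 2)) = 1 := by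
    rw [← Real.rpow_add hT, ← Real.rpow_add hT]
    norm_num
  constructor
  · -- first coordinate
    have hr1 : (0 : ℝ) ≤ ((T ^ ((1 : ℝ) / 4))⁻¹ : ℝ) ^ k :=
      pow_nonneg (inv_nonneg.mpr hA0.le) k
    have e1 := calc1 (partial1 k ⇑ψ₁) (partial1_continuous hψ k) hT hr1 hα
      (partial1 k (pker (⇑ψ₁) T)) (fun z => partial1_pker hψ k hT z) x
    rw [e1, ← hB1]
    have hk1 : ((T ^ ((1 : ℝ) / 4))⁻¹ : ℝ) ^ k * (T ^ ((1 : ℝ) / 4)) ^ α =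
        (T ^ ((1 : ℝ) / 4)) ^ (-(k : ℝ) + α) := by
      rw [inv_pow, ← Real.rpow_natCast (T ^ ((1 : ℝ) / 4)) k, ← Real.rpow_neg hA0.le,
        ← Real.rpow_add hA0]
    have hcoef : T ^ (-(3 / 4 : ℝ)) * ((T ^ ((1 : ℝ) / 4))⁻¹ : ℝ) ^ k *
        (T ^ ((1 : ℝ) / 4)) ^ α * (T ^ ((1 : ℝ) / 4) * T ^ ((1 : ℝ) / 2)) =
        (T ^ ((1 : ℝ) / 4)) ^ (-(k : ℝ) + α) := by
      calc T ^ (-(3 / 4 : ℝ)) * ((T ^ ((1 : ℝ) / 4))⁻¹ : ℝ) ^ k *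
            (T ^ ((1 : ℝ) / 4)) ^ α * (T ^ ((1 : ℝ) / 4) * T ^ ((1 : ℝ) / 2))
          = (T ^ (-(3 / 4 : ℝ)) * (T ^ ((1 : ℝ) / 4) * T ^ ((1 : ℝ) / 2))) *
            (((T ^ ((1 : ℝ) / 4))⁻¹ : ℝ) ^ k * (T ^ ((1 : ℝ) / 4)) ^ α) := by ring
        _ = (T ^ ((1 : ℝ) / 4)) ^ (-(k : ℝ) + α) := by rw [hone, hk1, one_mul]
    rw [hcoef]
    calc (T ^ ((1 : ℝ) / 4)) ^ (-(k : ℝ) + α) * B1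
        = B1 * (T ^ ((1 : ℝ) / 4)) ^ (-(k : ℝ) + α) := mul_comm _ _
      _ ≤ (max B1 B2 + 1) * (T ^ ((1 : ℝ) / 4)) ^ (-(k : ℝ) + α) := by
          refine mul_le_mul_of_nonneg_right ?_ (Real.rpow_nonneg hA0.le _)
          have := le_max_left B1 B2
          linarith
  · -- second coordinate
    have hr2 : (0 : ℝ) ≤ ((T ^ ((1 : ℝ) / 2))⁻¹ : ℝ) ^ k :=
      pow_nonneg (inv_nonneg.mpr hB0.le) k
    have e2 := calc1 (partial2 k ⇑ψ₁) (partial2_continuous hψ k) hT hr2 hα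
      (partial2 k (pker (⇑ψ₁) T)) (fun z => partial2_pker hψ k hT z) x
    rw [e2, ← hB2]
    have hk2 : ((T ^ ((1 : ℝ) / 2))⁻¹ : ℝ) ^ k * (T ^ ((1 : ℝ) / 4)) ^ α =
        (T ^ ((1 : ℝ) / 4)) ^ (-(2 * k : ℝ) + α) := by
      rw [← hAB, inv_pow, ← pow_mul, ← Real.rpow_natCast (T ^ ((1 : ℝ) / 4)) (2 * k),
        ← Real.rpow_neg hA0.le, ← Real.rpow_add hA0]
      congr 1
      push_cast
      ring
    have hcoef : T ^ (-(3 / 4 : ℝ)) * ((T ^ ((1 : ℝ) / 2))⁻¹ : ℝ) ^ k *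
        (T ^ ((1 : ℝ) / 4)) ^ α * (T ^ ((1 : ℝ) / 4) * T ^ ((1 : ℝ) / 2)) =
        (T ^ ((1 : ℝ) / 4)) ^ (-(2 * k : ℝ) + α) := by
      calc T ^ (-(3 / 4 : ℝ)) * ((T ^ ((1 : ℝ) / 2))⁻¹ : ℝ) ^ k *
            (T ^ ((1 : ℝ) / 4)) ^ α * (T ^ ((1 : ℝ) / 4) * T ^ ((1 : ℝ) / 2))
          = (T ^ (-(3 / 4 : ℝ)) * (T ^ ((1 : ℝ) / 4) * T ^ ((1 : ℝ) / 2))) *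
            (((T ^ ((1 : ℝ) / 2))⁻¹ : ℝ) ^ k * (T ^ ((1 : ℝ) / 4)) ^ α) := by ring
        _ = (T ^ ((1 : ℝ) / 4)) ^ (-(2 * k : ℝ) + α) := by rw [hone, hk2, one_mul]
    rw [hcoef]
    calc (T ^ ((1 : ℝ) / 4)) ^ (-(2 * k : ℝ) + α) * B2
        = B2 * (T ^ ((1 : ℝ) / 4)) ^ (-(2 * k : ℝ) + α) := mul_comm _ _
      _ ≤ (max B1 B2 + 1) * (T ^ ((1 : ℝ) / 4)) ^ (-(2 * k : ℝ) + α) := by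
          refine mul_le_mul_of_nonneg_right ?_ (Real.rpow_nonneg hA0.le _)
          have := le_max_right B1 B2
          linarith
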